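/- With l : g → ℝ h-invariant and Ad(H)-invariant as above, the quantity Ad*_{γ(t)^{-1}} (δl/δu)(t) is independent of the choice of lift γ of a curve in G/H: if γ₁ = γh then Ad*_{γ₁^{-1}}(δl/δu₁) = Ad*_{γ^{-1}}(δl/δu). -/

import Mathlib

/-- With `l : g → ℝ` `𝔥`-invariant under addition and `Ad(H)`-invariant, the quantity
`Ad*_{γ(t)⁻¹} (δl/δu)(t)` is independent of the choice of lift of a curve in `G/H`:
if `γ₁ = γh`, with left logarithmic derivatives `u` and `u₁ = Ad(h⁻¹)u + δˡh`, then
`Ad*_{γ₁⁻¹}(δl/δu₁) = Ad*_{γ⁻¹}(δl/δu)` (stated pairing-wise). -/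
theorem stmt9
    {G : Type*} [Group G]
    {g : Type*} [NormedAddCommGroup g] [NormedSpace ℝ g]
    (H : Subgroup G) (𝔥 : Submodule ℝ g)
    (Ad : G →* (g →L[ℝ] g))
    (l : g → ℝ) (dl : g → (g →L[ℝ] ℝ))
    (hdl : ∀ x : g, HasFDerivAt l (dl x) x)
    (hinv𝔥 : ∀ ξ : g, ∀ ζ ∈ 𝔥, l (ξ + ζ) = l ξ)
    (hinvH : ∀ a ∈ H, ∀ ξ : g, l (Ad a ξ) = l ξ)
    (γ h : ℝ → G) (hmemH : ∀ t, h t ∈ H)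
    (w : ℝ → g) (hw : ∀ t, w t ∈ 𝔥)
    (u u₁ : ℝ → g)
    (hu₁ : ∀ t, u₁ t = Ad ((h t)⁻¹) (u t) + w t) :
    ∀ (t : ℝ) (ξ : g),
      dl (u₁ t) (Ad ((γ t * h t)⁻¹) ξ) = dl (u t) (Ad ((γ t)⁻¹) ξ) := by
  -- invariance under adding 𝔥 gives dl (x + ζ) = dl x
  have key𝔥 : ∀ (x : g) (ζ : g), ζ ∈ 𝔥 → dl (x + ζ) = dl x := by
    intro x ζ hζ
    have h1 : HasFDerivAt (fun y => l (y + ζ)) (dl (x + ζ)) x := by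
      have := (hdl (x + ζ)).comp x
        ((hasFDerivAt_id x).add_const ζ)
      simpa [Function.comp_def] using this
    have h2 : (fun y => l (y + ζ)) = l := funext fun y => hinv𝔥 y ζ hζ
    rw [h2] at h1
    exact h1.unique (hdl x)
  -- Ad-invariance gives dl (Ad a x) (Ad a ξ) = dl x ξ
  have keyH : ∀ a ∈ H, ∀ (x ξ : g), dl (Ad a x) (Ad a ξ) = dl x ξ := by
    intro a ha x ξ
    have h1 : HasFDerivAt (fun y => l (Ad a y)) ((dl (Ad a x)).comp (Ad a)) x :=
      (hdl (Ad a x)).comp x (Ad a).hasFDerivAt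
    have h2 : (fun y => l (Ad a y)) = l := funext fun y => hinvH a ha y
    rw [h2] at h1
    have := h1.unique (hdl x)
    calc dl (Ad a x) (Ad a ξ) = ((dl (Ad a x)).comp (Ad a)) ξ := rfl
      _ = dl x ξ := by rw [this]
  intro t ξ
  have hAd : Ad ((γ t * h t)⁻¹) ξ = Ad ((h t)⁻¹) (Ad ((γ t)⁻¹) ξ) := by
    rw [mul_inv_rev, map_mul]; rfl
  rw [hAd, hu₁ t, key𝔥 _ _ (hw t)]
  exact keyH _ (inv_mem (hmemH t)) (u t) (Ad ((γ t)⁻¹) ξ)
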